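/- Let X be a regular Hausdorff weakly first countable topological space in which every point has a countably compact neighborhood. Then X × Y is weakly first countable for every weakly first countable topological space Y. -/

import Mathlib

open Filter Topology

/-- A weak base for a topological space: a family of filter bases `B x` with
`x` in every member, such that a set is open iff it absorbs a member of `B x`
at each of its points. -/
def IsWeakBase {X : Type*} [TopologicalSpace X] (B : X → Set (Set X)) : Prop :=
  (∀ x, (B x).Nonempty) ∧
  (∀ x, ∀ V₁ ∈ B x, ∀ V₂ ∈ B x, ∃ W ∈ B x, W ⊆ V₁ ∩ V₂) ∧
  (∀ x, ∀ V ∈ B x, x ∈ V) ∧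
  (∀ U : Set X, IsOpen U ↔ ∀ x ∈ U, ∃ V ∈ B x, V ⊆ U)

/-- A topological space is weakly first countable if it has a weak base with
`B x` countable for every `x`. -/
def WeaklyFirstCountable (X : Type*) [TopologicalSpace X] : Prop :=
  ∃ B : X → Set (Set X), IsWeakBase B ∧ ∀ x, (B x).Countable

universe u

/-- A subset is countably compact if every countable open cover has a finite subcover. -/
def CountablyCompactSet {X : Type*} [TopologicalSpace X] (K : Set X) : Prop :=
  ∀ U : ℕ → Set X, (∀ n, IsOpen (U n)) → K ⊆ ⋃ n, U n →
    ∃ t : Finset ℕ, K ⊆ ⋃ n ∈ t, U n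

namespace WB

open Set

variable {X : Type*} [TopologicalSpace X]

lemma ccs_of_closed_subset {K C : Set X} (hK : CountablyCompactSet K)
    (hC : IsClosed C) (hsub : C ⊆ K) : CountablyCompactSet C := by
  intro U hU hcov
  set V : ℕ → Set X := fun n => Nat.rec Cᶜ (fun m _ => U m) n with hVdef
  have hVopen : ∀ n, IsOpen (V n) := by
    intro n
    cases n with
    | zero => exact hC.isOpen_compl
    | succ m => exact hU m
  have hVcov : K ⊆ ⋃ n, V n := by
    intro x hx
    by_cases hxC : x ∈ C
    · obtain ⟨s, ⟨n, rfl⟩, hn⟩ := hcov hxC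
      exact mem_iUnion.mpr ⟨n + 1, hn⟩
    · exact mem_iUnion.mpr ⟨0, hxC⟩
  obtain ⟨t, ht⟩ := hK V hVopen hVcov
  refine ⟨t.preimage (· + 1) (fun a _ b _ hab => by simpa using hab), fun x hx => ?_⟩
  have := ht (hsub hx)
  simp only [mem_iUnion, exists_prop] at this ⊢
  obtain ⟨n, hnt, hxn⟩ := this
  cases n with
  | zero => exact absurd hx hxn
  | succ m => exact ⟨m, Finset.mem_preimage.mpr hnt, hxn⟩

lemma exists_antitone_basis {B : X → Set (Set X)} (hB : IsWeakBase B)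
    (hc : ∀ x, (B x).Countable) (x : X) :
    ∃ W : ℕ → Set X, (∀ n, W n ∈ B x) ∧ (∀ m n, m ≤ n → W n ⊆ W m) ∧
      ∀ V ∈ B x, ∃ n, W n ⊆ V := by
  obtain ⟨e, he⟩ := (hc x).exists_eq_range (hB.1 x)
  have hemem : ∀ n, e n ∈ B x := fun n => he ▸ ⟨n, rfl⟩
  choose st hst1 hst2 using
    fun (p : {V // V ∈ B x}) (n : ℕ) => hB.2.1 x p.1 p.2 (e n) (hemem n)
  let f : ℕ → {V // V ∈ B x} := fun n =>
    Nat.rec ⟨e 0, hemem 0⟩ (fun m p => ⟨st p (m + 1), hst1 p (m + 1)⟩) n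
  have hstep : ∀ n, (f (n + 1)).1 ⊆ (f n).1 :=
    fun n => (hst2 (f n) (n + 1)).trans inter_subset_left
  refine ⟨fun n => (f n).1, fun n => (f n).2, ?_, ?_⟩
  · intro m n hmn
    induction hmn with
    | refl => exact subset_rfl
    | step h ih => exact (hstep _).trans ih
  · intro V hV
    rw [he] at hV
    obtain ⟨m, rfl⟩ := hV
    cases m with
    | zero => exact ⟨0, subset_rfl⟩
    | succ k => exact ⟨k + 1, (hst2 (f k) (k + 1)).trans inter_subset_right⟩

lemma tendsto_of_antitone_mem {B : X → Set (Set X)} (hB : IsWeakBase B) {x : X}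
    {W : ℕ → Set X} (hanti : ∀ m n, m ≤ n → W n ⊆ W m)
    (hcof : ∀ V ∈ B x, ∃ n, W n ⊆ V) {s : ℕ → X} (hs : ∀ n, s n ∈ W n) :
    Tendsto s atTop (𝓝 x) := by
  rw [tendsto_atTop_nhds]
  intro O hxO hO
  obtain ⟨V, hV, hVO⟩ := (hB.2.2.2 O).mp hO x hxO
  obtain ⟨m, hm⟩ := hcof V hV
  exact ⟨m, fun n hn => hVO (hm (hanti m n hn (hs n)))⟩

lemma isClosed_of_seq {B : X → Set (Set X)} (hB : IsWeakBase B)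
    (hc : ∀ x, (B x).Countable) {A : Set X}
    (hA : ∀ (s : ℕ → X) (z : X), (∀ n, s n ∈ A) → Tendsto s atTop (𝓝 z) → z ∈ A) :
    IsClosed A := by
  rw [← isOpen_compl_iff, hB.2.2.2]
  intro z hz
  by_contra hcon
  push_neg at hcon
  obtain ⟨W, hWmem, hWanti, hWcof⟩ := exists_antitone_basis hB hc z
  have hpick : ∀ n : ℕ, ∃ w, w ∈ W n ∧ w ∈ A := by
    intro n
    have h1 := hcon (W n) (hWmem n)
    rw [not_subset] at h1
    obtain ⟨w, hw1, hw2⟩ := h1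
    exact ⟨w, hw1, not_not.mp hw2⟩
  choose s hs1 hs2 using hpick
  exact hz (hA s z hs2 (tendsto_of_antitone_mem hB hWanti hWcof hs1))

lemma frequently_mem_of_tendsto [T2Space X] {B : X → Set (Set X)} (hB : IsWeakBase B)
    {s : ℕ → X} {x : X} (hs : Tendsto s atTop (𝓝 x)) {V : Set X} (hV : V ∈ B x) :
    ∀ a : ℕ, ∃ n, a ≤ n ∧ s n ∈ V := by
  intro a
  set t : ℕ → X := fun i => s (i + a) with htdef
  have htend : Tendsto t atTop (𝓝 x) := hs.comp (tendsto_add_atTop_nat a)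
  by_cases hx : ∃ i, t i = x
  · obtain ⟨i, hi⟩ := hx
    refine ⟨i + a, Nat.le_add_left a i, ?_⟩
    rw [show s (i + a) = x from hi]
    exact hB.2.2.1 x V hV
  · push_neg at hx
    have hxr : x ∉ range t := by
      rintro ⟨i, hi⟩
      exact hx i hi
    have hclosed : IsClosed (insert x (range t)) := htend.isCompact_insert_range.isClosed
    have hnotopen : ¬ IsOpen ((range t)ᶜ) := by
      intro hop
      obtain ⟨N, hN⟩ := tendsto_atTop_nhds.mp htend ((range t)ᶜ) hxr hop
      exact hN N le_rfl ⟨N, rfl⟩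
    have hex : ¬ ∀ z ∈ (range t)ᶜ, ∃ V' ∈ B z, V' ⊆ (range t)ᶜ :=
      fun hh => hnotopen ((hB.2.2.2 ((range t)ᶜ)).mpr hh)
    push_neg at hex
    obtain ⟨z, hz, hzz⟩ := hex
    have hzx : z = x := by
      by_contra hne
      have hzi : z ∈ (insert x (range t))ᶜ := by
        simp only [mem_compl_iff, mem_insert_iff, not_or]
        exact ⟨hne, hz⟩
      obtain ⟨V', hV', hsub⟩ :=
        (hB.2.2.2 _).mp hclosed.isOpen_compl z hzi
      exact hzz V' hV' (hsub.trans (compl_subset_compl.mpr (subset_insert x _)))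
    subst hzx
    have h2 := hzz V hV
    rw [not_subset] at h2
    obtain ⟨w, hwV, hwr⟩ := h2
    rw [mem_compl_iff, not_not] at hwr
    obtain ⟨i, hi⟩ := hwr
    refine ⟨i + a, Nat.le_add_left a i, ?_⟩
    rw [show s (i + a) = w from hi]
    exact hwV


lemma seq_compact [T2Space X] {B : X → Set (Set X)} (hB : IsWeakBase B)
    (hc : ∀ x, (B x).Countable) {C : Set X} (hC : IsClosed C)
    (hcc : CountablyCompactSet C) (u : ℕ → X) (hu : ∀ n, u n ∈ C) :
    ∃ z ∈ C, ∃ φ : ℕ → ℕ, StrictMono φ ∧ Tendsto (u ∘ φ) atTop (𝓝 z) := by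
  by_cases hfib : ∃ v, {n | u n = v}.Infinite
  · obtain ⟨v, hv⟩ := hfib
    have hfreq : ∀ N, ∃ n > N, u n = v := by
      intro N
      obtain ⟨n, hn⟩ := (hv.diff (Set.finite_Iic N)).nonempty
      exact ⟨n, by simpa using hn.2, hn.1⟩
    obtain ⟨φ, hφmono, hφ⟩ := Nat.exists_strictMono_subsequence hfreq
    have hvC : v ∈ C := by
      obtain ⟨n, _, hnv⟩ := hfreq 0
      exact hnv ▸ hu n
    refine ⟨v, hvC, φ, hφmono, ?_⟩
    have he : (u ∘ φ) = fun _ => v := funext fun n => hφ n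
    rw [he]
    exact tendsto_const_nhds
  · push_neg at hfib
    by_contra hcon
    push_neg at hcon
    have hnoconv : ∀ (z : X) (φ : ℕ → ℕ), StrictMono φ → ¬ Tendsto (u ∘ φ) atTop (𝓝 z) := by
      intro z φ hφ htend
      have hzC : z ∈ C :=
        hC.mem_of_tendsto htend (Filter.Eventually.of_forall fun n => hu (φ n))
      exact hcon z hzC φ hφ htend
    have hclosedS : ∀ S : Set X, S ⊆ range u → IsClosed S := by
      intro S hS
      refine isClosed_of_seq hB hc ?_
      intro s z hsS htend
      by_cases hsv : ∃ v, {i | s i = v}.Infinite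
      · obtain ⟨v, hv⟩ := hsv
        have hfreq : ∀ N, ∃ n > N, s n = v := by
          intro N
          obtain ⟨n, hn⟩ := (hv.diff (Set.finite_Iic N)).nonempty
          exact ⟨n, by simpa using hn.2, hn.1⟩
        obtain ⟨ψ, hψmono, hψ⟩ := Nat.exists_strictMono_subsequence hfreq
        have h1 : Tendsto (s ∘ ψ) atTop (𝓝 z) := htend.comp hψmono.tendsto_atTop
        have h2 : (s ∘ ψ) = fun _ => v := funext fun n => hψ n
        rw [h2] at h1
        have hzv : z = v := tendsto_nhds_unique h1 tendsto_const_nhds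
        obtain ⟨i, hi⟩ := hfreq 0
        exact hzv ▸ (hi.2 ▸ hsS i)
      · push_neg at hsv
        exfalso
        have hsvfin : ∀ v, {i | s i = v}.Finite := fun v => hsv v
        have hstep : ∀ p : ℕ × ℕ, ∃ q : ℕ × ℕ, p.1 < q.1 ∧ p.2 < q.2 ∧ u q.2 = s q.1 := by
          rintro ⟨k, m⟩
          have hbadfin : {i : ℕ | s i ∈ u '' (Set.Iic m)}.Finite := by
            have hsubb : {i : ℕ | s i ∈ u '' Set.Iic m} ⊆ ⋃ v ∈ u '' Set.Iic m, {i | s i = v} := by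
              intro i hi
              exact mem_biUnion hi rfl
            exact (Set.Finite.biUnion ((Set.finite_Iic m).image u) (fun v _ => hsvfin v)).subset hsubb
          obtain ⟨k', hk'⟩ := ((hbadfin.union (Set.finite_Iic k)).infinite_compl).nonempty
          simp only [mem_compl_iff, mem_union, not_or, mem_setOf_eq, Set.mem_Iic, not_le] at hk'
          obtain ⟨hk'bad, hk'gt⟩ := hk'
          obtain ⟨m', hm'⟩ := hS (hsS k')
          refine ⟨(k', m'), hk'gt, ?_, hm'⟩
          by_contra hle
          push_neg at hle
          exact hk'bad ⟨m', hle, hm'⟩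
        choose st hst1 hst2 hst3 using hstep
        obtain ⟨m0, hm0⟩ := hS (hsS 0)
        set G : ℕ → ℕ × ℕ := fun n => st^[n] (0, m0) with hGdef
        have hGsucc : ∀ n, G (n + 1) = st (G n) := fun n => Function.iterate_succ_apply' st n _
        have hψmono : StrictMono (fun n => (G n).1) := by
          apply strictMono_nat_of_lt_succ
          intro n
          rw [hGsucc n]
          exact hst1 (G n)
        have hφmono : StrictMono (fun n => (G n).2) := by
          apply strictMono_nat_of_lt_succ
          intro n
          rw [hGsucc n]
          exact hst2 (G n)
        have hval : ∀ n, u ((G n).2) = s ((G n).1) := by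
          intro n
          cases n with
          | zero => exact hm0
          | succ m => rw [hGsucc m]; exact hst3 (G m)
        have htend2 : Tendsto (u ∘ fun n => (G n).2) atTop (𝓝 z) := by
          have heq : (u ∘ fun n => (G n).2) = (s ∘ fun n => (G n).1) := funext fun n => hval n
          rw [heq]
          exact htend.comp hψmono.tendsto_atTop
        exact hnoconv z _ hφmono htend2
    have hrange_inf : (range u).Infinite := by
      intro hfin
      have huniv : (Set.univ : Set ℕ).Finite := by
        have hcov : (Set.univ : Set ℕ) ⊆ ⋃ v ∈ range u, {n | u n = v} :=
          fun n _ => mem_biUnion ⟨n, rfl⟩ rfl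
        exact ((hfin.biUnion (fun v _ => hfib v)).subset hcov)
      exact Set.infinite_univ huniv
    set V : ℕ → Set X := fun n => Nat.rec ((range u)ᶜ) (fun m _ => (range u \ {u m})ᶜ) n with hVdef
    have hVopen : ∀ n, IsOpen (V n) := by
      intro n
      cases n with
      | zero => exact (hclosedS (range u) subset_rfl).isOpen_compl
      | succ m => exact (hclosedS (range u \ {u m}) diff_subset).isOpen_compl
    have hVcov : C ⊆ ⋃ n, V n := by
      intro c hcC
      by_cases hcr : c ∈ range u
      · obtain ⟨n, rfl⟩ := hcr
        exact mem_iUnion.mpr ⟨n + 1, fun hmem => hmem.2 rfl⟩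
      · exact mem_iUnion.mpr ⟨0, hcr⟩
    obtain ⟨t, ht⟩ := hcc V hVopen hVcov
    have himg : (u '' {n | n + 1 ∈ t}).Finite := by
      apply Set.Finite.image
      have : {n | n + 1 ∈ t} ⊆ (fun n => n + 1) ⁻¹' ↑t := fun n hn => hn
      exact (t.finite_toSet.preimage (fun a _ b _ hab => by simpa using hab)).subset this
    obtain ⟨w, hw⟩ := (hrange_inf.diff himg).nonempty
    obtain ⟨⟨m, rfl⟩, hwm⟩ := hw
    have hmem := ht (hu m)
    simp only [mem_iUnion, exists_prop] at hmem
    obtain ⟨n, hnt, hxn⟩ := hmem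
    cases n with
    | zero => exact hxn ⟨m, rfl⟩
    | succ j =>
      have : u m = u j := by
        by_contra hne
        exact hxn ⟨⟨m, rfl⟩, hne⟩
      exact hwm ⟨j, hnt, this.symm⟩

lemma slab_open {Y : Type*} [TopologicalSpace Y] [T2Space X]
    {B : X → Set (Set X)} (hB : IsWeakBase B) (hc : ∀ x, (B x).Countable)
    {BY : Y → Set (Set Y)} (hBY : IsWeakBase BY) (hcY : ∀ y, (BY y).Countable)
    {Wx : X → ℕ → Set X} (hWmem : ∀ x n, Wx x n ∈ B x)
    {W : Set (X × Y)}
    (hW : ∀ p ∈ W, ∃ n : ℕ, ∃ V ∈ BY p.2, (closure (Wx p.1 n)) ×ˢ V ⊆ W)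
    {C : Set X} (hCcl : IsClosed C) (hcc : CountablyCompactSet C) :
    IsOpen {y' : Y | ∀ c ∈ C, (c, y') ∈ W} := by
  rw [hBY.2.2.2]
  intro y' hy'
  by_contra hcon
  push_neg at hcon
  obtain ⟨VY, hVYmem, hVYanti, hVYcof⟩ := exists_antitone_basis hBY hcY y'
  have hpick : ∀ j : ℕ, ∃ yj, yj ∈ VY j ∧ ∃ c ∈ C, (c, yj) ∉ W := by
    intro j
    have h1 := hcon (VY j) (hVYmem j)
    rw [not_subset] at h1
    obtain ⟨yj, hyj1, hyj2⟩ := h1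
    simp only [mem_setOf_eq] at hyj2
    push_neg at hyj2
    exact ⟨yj, hyj1, hyj2⟩
  choose yj hyj cj hcj hnW using hpick
  obtain ⟨z, hzC, φ, hφ, htend⟩ := seq_compact hB hc hCcl hcc cj hcj
  have hzW : (z, y') ∈ W := hy' z hzC
  obtain ⟨n, Vs, hVs, hsub⟩ := hW (z, y') hzW
  obtain ⟨j₀, hj₀⟩ := hVYcof Vs hVs
  obtain ⟨i, hi_ge, hi_mem⟩ := frequently_mem_of_tendsto hB htend (hWmem z n) j₀
  have hφi : j₀ ≤ φ i := le_trans hi_ge hφ.le_apply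
  exact hnW (φ i)
    (hsub ⟨subset_closure hi_mem, hj₀ (hVYanti j₀ (φ i) hφi (hyj (φ i)))⟩)

end WB

open WB Set

/-- A regular Hausdorff weakly first countable space in which every point has a
countably compact neighborhood has weakly first countable product with every
weakly first countable space. -/
theorem stmt19 {X : Type u} [TopologicalSpace X] [T2Space X] [RegularSpace X]
    (hw : WeaklyFirstCountable X) (h : ∀ x : X, ∃ K ∈ 𝓝 x, CountablyCompactSet K) :
    ∀ (Y : Type u) [TopologicalSpace Y], WeaklyFirstCountable Y →
      WeaklyFirstCountable (X × Y) := by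
  obtain ⟨BX, hBX, hBXc⟩ := hw
  choose Wx hWmem hWanti hWcof using fun x => exists_antitone_basis hBX hBXc x
  intro Y instY hwY
  obtain ⟨BY, hBY, hBYc⟩ := hwY
  show ∃ B : (X × Y) → Set (Set (X × Y)), IsWeakBase B ∧ ∀ p, (B p).Countable

  refine ⟨fun p => {R | ∃ n : ℕ, ∃ V ∈ BY p.2, R = (closure (Wx p.1 n)) ×ˢ V},
    ⟨?_, ?_, ?_, ?_⟩, ?_⟩
  · -- nonempty
    intro p
    obtain ⟨V, hV⟩ := hBY.1 p.2
    exact ⟨_, 0, V, hV, rfl⟩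
  · -- directedness
    rintro p R₁ ⟨n₁, V₁, hV₁, rfl⟩ R₂ ⟨n₂, V₂, hV₂, rfl⟩
    obtain ⟨V₃, hV₃, hV₃sub⟩ := hBY.2.1 p.2 V₁ hV₁ V₂ hV₂
    refine ⟨(closure (Wx p.1 (max n₁ n₂))) ×ˢ V₃, ⟨max n₁ n₂, V₃, hV₃, rfl⟩, ?_⟩
    rintro ⟨a, b⟩ ⟨ha, hb⟩
    exact ⟨⟨closure_mono (hWanti p.1 n₁ _ (le_max_left _ _)) ha, (hV₃sub hb).1⟩,
      ⟨closure_mono (hWanti p.1 n₂ _ (le_max_right _ _)) ha, (hV₃sub hb).2⟩⟩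
  · -- membership
    rintro p R ⟨n, V, hV, rfl⟩
    exact ⟨subset_closure (hBX.2.2.1 p.1 _ (hWmem p.1 n)), hBY.2.2.1 p.2 V hV⟩
  · -- open iff absorbed
    intro U
    constructor
    · intro hU p hp
      rw [isOpen_prod_iff] at hU
      obtain ⟨O₁, O₂, hO₁, hO₂, hp₁, hp₂, hsub⟩ := hU p.1 p.2 hp
      obtain ⟨Cc, ⟨hCcn, hCccl⟩, hCcsub⟩ :=
        (closed_nhds_basis p.1).mem_iff.mp (hO₁.mem_nhds hp₁)
      obtain ⟨V', hV', hV'sub⟩ :=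
        (hBX.2.2.2 (interior Cc)).mp isOpen_interior p.1 (mem_interior_iff_mem_nhds.mpr hCcn)
      obtain ⟨n, hn⟩ := hWcof p.1 V' hV'
      have hFsub : closure (Wx p.1 n) ⊆ O₁ :=
        ((closure_mono (hn.trans hV'sub)).trans
          (closure_minimal interior_subset hCccl)).trans hCcsub
      obtain ⟨V, hV, hVsub⟩ := (hBY.2.2.2 O₂).mp hO₂ p.2 hp₂
      refine ⟨_, ⟨n, V, hV, rfl⟩, ?_⟩
      rintro ⟨a, b⟩ ⟨ha, hb⟩
      exact hsub ⟨hFsub ha, hVsub hb⟩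
    · intro habs
      have habs' : ∀ p ∈ U, ∃ n : ℕ, ∃ V ∈ BY p.2, (closure (Wx p.1 n)) ×ˢ V ⊆ U := by
        intro p hp
        obtain ⟨R, ⟨n, V, hV, rfl⟩, hsub⟩ := habs p hp
        exact ⟨n, V, hV, hsub⟩
      rw [isOpen_prod_iff]
      intro a b hab
      have hsec : IsOpen {x' : X | (x', b) ∈ U} := by
        rw [hBX.2.2.2]
        intro x' hx'
        obtain ⟨n, V, hV, hsub⟩ := habs' (x', b) hx'
        refine ⟨Wx x' n, hWmem x' n, fun x'' hx'' => ?_⟩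
        exact hsub ⟨subset_closure hx'', hBY.2.2.1 b V hV⟩
      obtain ⟨K, hKnhds, hKcc⟩ := h a
      have hOnhds : {x' : X | (x', b) ∈ U} ∩ interior K ∈ 𝓝 a :=
        (hsec.inter isOpen_interior).mem_nhds ⟨hab, mem_interior_iff_mem_nhds.mpr hKnhds⟩
      obtain ⟨Cc, ⟨hCcn, hCccl⟩, hCcsub⟩ := (closed_nhds_basis a).mem_iff.mp hOnhds
      have hCcK : Cc ⊆ K := fun c hc => interior_subset (hCcsub hc).2
      have hCccc : CountablyCompactSet Cc := ccs_of_closed_subset hKcc hCccl hCcK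
      refine ⟨interior Cc, {y' : Y | ∀ c ∈ Cc, (c, y') ∈ U}, isOpen_interior,
        slab_open hBX hBXc hBY hBYc hWmem habs' hCccl hCccc,
        mem_interior_iff_mem_nhds.mpr hCcn, fun c hc => (hCcsub hc).1, ?_⟩
      rintro ⟨a', b'⟩ ⟨ha', hb'⟩
      exact hb' a' (interior_subset ha')
  · -- countability
    intro p
    have heq : {R | ∃ n : ℕ, ∃ V ∈ BY p.2, R = (closure (Wx p.1 n)) ×ˢ V}
        = Set.image2 (fun (n : ℕ) (V : Set Y) => (closure (Wx p.1 n)) ×ˢ V)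
            Set.univ (BY p.2) := by
      ext R
      simp only [Set.mem_image2, Set.mem_univ, true_and, mem_setOf_eq]
      constructor
      · rintro ⟨n, V, hV, rfl⟩; exact ⟨n, V, hV, rfl⟩
      · rintro ⟨n, V, hV, rfl⟩; exact ⟨n, V, hV, rfl⟩
    show {R | ∃ n : ℕ, ∃ V ∈ BY p.2, R = (closure (Wx p.1 n)) ×ˢ V}.Countable
    rw [heq]
    exact Set.Countable.image2 Set.countable_univ (hBYc p.2) _
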